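/- Let P_ξ be the Pareto operator that, for index i and threshold c ∈ S(ξ), returns the set of vectors Γ(u) = (inf_w L^1(x_ξ^w(u),u), ..., inf_w L^m(x_ξ^w(u),u)) over all controls u optimal for the maximin problem maximizing inf_w L^i subject to the constraints parametrized by c. Then under the standing assumptions, P_ξ(i,c) is nonempty and P_ξ(i,c) ⊆ S(ξ) for every i ∈ {1,...,m} and c ∈ S(ξ). -/

import Mathlib

/-- Trajectory of the discrete-time control system `x_{k+1} = F_k(x_k, u_k, ω_k)`, `x_0 = ξ`. -/
def traj {X U W : Type*} (F : ℕ → X → U → W → X) (ξ : X) (u : ℕ → U) (w : ℕ → W) : ℕ → X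
  | 0 => ξ
  | k + 1 => F k (traj F ξ u w k) (u k) (w k)

/-- `u` is admissible for `(ξ, c)`: for every scenario, the mixed and end-point
constraints hold (componentwise, thresholds `c`). -/
def Adm {X U W : Type*} {m : ℕ} (N : ℕ) (F : ℕ → X → U → W → X) (Ω : ℕ → Set W)
    (g : ℕ → X → U → Fin m → ℝ) (θ : X → Fin m → ℝ) (ξ : X) (c : Fin m → ℝ)
    (u : ℕ → U) : Prop :=
  ∀ w : ℕ → W, (∀ k, w k ∈ Ω k) →
    (∀ k ≤ N, c ≤ g k (traj F ξ u w k) (u k)) ∧ c ≤ θ (traj F ξ u w (N + 1))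

/-- The set of robust sustainable thresholds `S(ξ)`. -/
def SST {X U W : Type*} {m : ℕ} (N : ℕ) (F : ℕ → X → U → W → X) (Ω : ℕ → Set W)
    (g : ℕ → X → U → Fin m → ℝ) (θ : X → Fin m → ℝ) (ξ : X) : Set (Fin m → ℝ) :=
  {c | ∃ u : ℕ → U, Adm N F Ω g θ ξ c u}


/-- The threshold map `Γ(u)_i = inf_w min{ min_{k≤N} g^k_i(x_k,u_k), θ_i(x_{N+1}) }`. -/
noncomputable def Gam {X U W : Type*} {m : ℕ} (N : ℕ) (F : ℕ → X → U → W → X)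
    (Ω : ℕ → Set W) (g : ℕ → X → U → Fin m → ℝ) (θ : X → Fin m → ℝ) (ξ : X)
    (u : ℕ → U) : Fin m → ℝ :=
  fun i => ⨅ w : {w : ℕ → W // ∀ k, w k ∈ Ω k},
    min ((Finset.Icc 0 N).inf' (Finset.nonempty_Icc.2 (Nat.zero_le N))
          fun k => g k (traj F ξ u w.1 k) (u k) i)
        (θ (traj F ξ u w.1 (N + 1)) i)

/-- Controls that are optimal for the maximin problem `v_ξ^i(c)`:
admissible for threshold `c` and maximizing `inf_w L^i = Γ(·)_i` among admissible controls. -/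
def OptCtrl {X U W : Type*} {m : ℕ} (N : ℕ) (F : ℕ → X → U → W → X) (Ω : ℕ → Set W)
    (g : ℕ → X → U → Fin m → ℝ) (θ : X → Fin m → ℝ) (ξ : X)
    (i : Fin m) (c : Fin m → ℝ) (u : ℕ → U) : Prop :=
  Adm N F Ω g θ ξ c u ∧
    ∀ u' : ℕ → U, Adm N F Ω g θ ξ c u' →
      Gam N F Ω g θ ξ u' i ≤ Gam N F Ω g θ ξ u i

/-- The Pareto operator `P_ξ(i,c)`: images under `Γ` of controls optimal for `v_ξ^i(c)`. -/
noncomputable def ParetoOp {X U W : Type*} {m : ℕ} (N : ℕ) (F : ℕ → X → U → W → X)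
    (Ω : ℕ → Set W) (g : ℕ → X → U → Fin m → ℝ) (θ : X → Fin m → ℝ) (ξ : X)
    (i : Fin m) (c : Fin m → ℝ) : Set (Fin m → ℝ) :=
  Gam N F Ω g θ ξ '' {u | OptCtrl N F Ω g θ ξ i c u}


section AuxStmt5
variable {β ι : Type*} [TopologicalSpace β]

lemma usc_superlevel_closed {f : β → ℝ} (hf : UpperSemicontinuous f) (c : ℝ) :
    IsClosed {x | c ≤ f x} := by
  have : {x | c ≤ f x} = (f ⁻¹' Set.Iio c)ᶜ := by ext x; simp [not_lt]
  rw [this]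
  exact (hf.isOpen_preimage _).isClosed_compl

lemma usc_min {f g : β → ℝ} (hf : UpperSemicontinuous f) (hg : UpperSemicontinuous g) :
    UpperSemicontinuous fun x => min (f x) (g x) := by
  rw [upperSemicontinuous_iff_isOpen_preimage] at *
  intro y
  have : (fun x => min (f x) (g x)) ⁻¹' Set.Iio y = f ⁻¹' Set.Iio y ∪ g ⁻¹' Set.Iio y := by
    ext x; simp [min_lt_iff]
  rw [this]
  exact (hf y).union (hg y)

lemma usc_finset_inf' {s : Finset ι} (hs : s.Nonempty) {f : ι → β → ℝ}
    (hf : ∀ k ∈ s, UpperSemicontinuous (f k)) :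
    UpperSemicontinuous fun x => s.inf' hs fun k => f k x := by
  induction hs using Finset.Nonempty.cons_induction with
  | singleton a =>
    simp only [Finset.inf'_singleton]
    exact hf a (Finset.mem_singleton_self a)
  | cons a s h hs ih =>
    simp only [Finset.inf'_cons (H := hs)]
    exact usc_min (hf a (by simp)) (ih fun k hk => hf k (Finset.mem_cons_of_mem hk))

lemma usc_exists_max {s : Set β} (hs : IsCompact s) (hne : s.Nonempty)
    {f : β → ℝ} (hf : UpperSemicontinuous f) :
    ∃ x ∈ s, ∀ y ∈ s, f y ≤ f x := by
  by_contra h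
  push_neg at h
  have hcov : s ⊆ ⋃ y ∈ s, f ⁻¹' Set.Iio (f y) := by
    intro x hx
    obtain ⟨y, hy, hxy⟩ := h x hx
    exact Set.mem_biUnion hy hxy
  obtain ⟨t, hts, htf, hcov'⟩ := hs.elim_finite_subcover_image
    (fun y _ => hf.isOpen_preimage (f y)) hcov
  obtain ⟨x₀, hx₀⟩ := hne
  have htne : htf.toFinset.Nonempty := by
    obtain ⟨y, hy, _⟩ := Set.mem_iUnion₂.1 (hcov' hx₀)
    exact ⟨y, htf.mem_toFinset.2 hy⟩
  obtain ⟨a, ha, hamax⟩ := Finset.exists_max_image htf.toFinset f htne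
  have has : a ∈ s := hts (htf.mem_toFinset.1 ha)
  obtain ⟨y, hy, hay⟩ := Set.mem_iUnion₂.1 (hcov' has)
  exact absurd (hamax y (htf.mem_toFinset.2 hy)) (not_le.2 hay)

lemma traj_cont' {X U W : Type*} [TopologicalSpace X] [TopologicalSpace U]
    (F : ℕ → X → U → W → X) (ξ : X) (w : ℕ → W)
    (hF : ∀ k, Continuous fun p : X × U => F k p.1 p.2 (w k)) (k : ℕ) :
    Continuous fun u : ℕ → U => traj F ξ u w k := by
  induction k with
  | zero => exact continuous_const
  | succ k ih => exact (hF k).comp (ih.prodMk (continuous_apply k))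

end AuxStmt5

/-- One scenario's payoff `L^j`. -/
noncomputable def Gfun {X U W : Type*} {m : ℕ} (N : ℕ) (F : ℕ → X → U → W → X)
    (Ω : ℕ → Set W) (g : ℕ → X → U → Fin m → ℝ) (θ : X → Fin m → ℝ) (ξ : X)
    (j : Fin m) (w : {w : ℕ → W // ∀ k, w k ∈ Ω k}) (u : ℕ → U) : ℝ :=
  min ((Finset.Icc 0 N).inf' (Finset.nonempty_Icc.2 (Nat.zero_le N))
        fun k => g k (traj F ξ u w.1 k) (u k) j)
      (θ (traj F ξ u w.1 (N + 1)) j)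

lemma Gam_eq {X U W : Type*} {m : ℕ} (N : ℕ) (F : ℕ → X → U → W → X)
    (Ω : ℕ → Set W) (g : ℕ → X → U → Fin m → ℝ) (θ : X → Fin m → ℝ) (ξ : X)
    (u : ℕ → U) (j : Fin m) :
    Gam N F Ω g θ ξ u j = ⨅ w, Gfun N F Ω g θ ξ j w u := rfl

/-- Under the standing assumptions, the Pareto operator has nonempty values
and its images are robust sustainable thresholds. -/
theorem stmt5 {X U W : Type*} [NormedAddCommGroup X] [NormedSpace ℝ X] [FiniteDimensional ℝ X]
    [MetricSpace U] [CompactSpace U] [Nonempty U]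
    {m N : ℕ} (F : ℕ → X → U → W → X) (Ω : ℕ → Set W) (hΩ : ∀ k, (Ω k).Nonempty)
    (g : ℕ → X → U → Fin m → ℝ) (θ : X → Fin m → ℝ)
    (hF : ∀ k, ∀ ω ∈ Ω k, Continuous fun p : X × U => F k p.1 p.2 ω)
    (hg_usc : ∀ k i, UpperSemicontinuous fun p : X × U => g k p.1 p.2 i)
    (hg_bdd : ∀ k i, BddBelow (Set.range fun p : X × U => g k p.1 p.2 i))
    (hθ_usc : ∀ i, UpperSemicontinuous fun x => θ x i)
    (hθ_bdd : ∀ i, BddBelow (Set.range fun x => θ x i))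
    (ξ : X) (i : Fin m) (c : Fin m → ℝ) (hc : c ∈ SST N F Ω g θ ξ) :
    (ParetoOp N F Ω g θ ξ i c).Nonempty ∧
    ParetoOp N F Ω g θ ξ i c ⊆ SST N F Ω g θ ξ := by
  classical
  obtain ⟨u₀, hu₀⟩ := hc
  haveI hWne : Nonempty {w : ℕ → W // ∀ k, w k ∈ Ω k} :=
    ⟨⟨fun k => (hΩ k).choose, fun k => (hΩ k).choose_spec⟩⟩
  have neI : (Finset.Icc 0 N).Nonempty := Finset.nonempty_Icc.2 (Nat.zero_le N)
  choose bg hbg using hg_bdd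
  choose bθ hbθ using hθ_bdd
  -- uniform lower bound for `Gfun`
  have hLbG : ∀ (j : Fin m) (w : {w : ℕ → W // ∀ k, w k ∈ Ω k}) (u : ℕ → U),
      min ((Finset.Icc 0 N).inf' neI fun k => bg k j) (bθ j) ≤ Gfun N F Ω g θ ξ j w u := by
    intro j w u
    refine min_le_min ?_ (hbθ j (Set.mem_range_self _))
    refine Finset.le_inf' _ _ fun k hk => ?_
    exact le_trans (Finset.inf'_le _ hk)
      (hbg k j (Set.mem_range_self (traj F ξ u w.1 k, u k)))
  have hbdd : ∀ (j : Fin m) (u : ℕ → U),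
      BddBelow (Set.range fun w => Gfun N F Ω g θ ξ j w u) := by
    intro j u
    refine ⟨min ((Finset.Icc 0 N).inf' neI fun k => bg k j) (bθ j), ?_⟩
    rintro y ⟨w, rfl⟩
    exact hLbG j w u
  have hGamle : ∀ (u : ℕ → U) (j : Fin m) (w : {w : ℕ → W // ∀ k, w k ∈ Ω k}),
      Gam N F Ω g θ ξ u j ≤ Gfun N F Ω g θ ξ j w u := by
    intro u j w
    rw [Gam_eq]
    exact ciInf_le (hbdd j u) w
  -- `Γ(u) ∈ S(ξ)` whenever `u` is admissible for some threshold: `u` itself witnesses it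
  have hsub : ParetoOp N F Ω g θ ξ i c ⊆ SST N F Ω g θ ξ := by
    rintro _ ⟨u, hu, rfl⟩
    refine ⟨u, fun w hw => ⟨fun k hk j => ?_, fun j => ?_⟩⟩
    · refine le_trans (hGamle u j ⟨w, hw⟩) (le_trans (min_le_left _ _) ?_)
      exact Finset.inf'_le _ (Finset.mem_Icc.2 ⟨Nat.zero_le _, hk⟩)
    · exact le_trans (hGamle u j ⟨w, hw⟩) (min_le_right _ _)
  -- upper semicontinuity of the building blocks
  have husc : ∀ (w : {w : ℕ → W // ∀ k, w k ∈ Ω k}) (k : ℕ) (j : Fin m),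
      UpperSemicontinuous fun u : ℕ → U => g k (traj F ξ u w.1 k) (u k) j := by
    intro w k j
    exact (hg_usc k j).comp
      ((traj_cont' F ξ w.1 (fun k => hF k (w.1 k) (w.2 k)) k).prodMk (continuous_apply k))
  have huscθ : ∀ (w : {w : ℕ → W // ∀ k, w k ∈ Ω k}) (j : Fin m),
      UpperSemicontinuous fun u : ℕ → U => θ (traj F ξ u w.1 (N + 1)) j := by
    intro w j
    exact (hθ_usc j).comp
      (traj_cont' F ξ w.1 (fun k => hF k (w.1 k) (w.2 k)) (N + 1))
  -- the admissible set is closed, hence compact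
  have hAclosed : IsClosed {u : ℕ → U | Adm N F Ω g θ ξ c u} := by
    have hset : {u : ℕ → U | Adm N F Ω g θ ξ c u} =
        ⋂ (w : {w : ℕ → W // ∀ k, w k ∈ Ω k}) (j : Fin m),
          ((⋂ k ∈ Finset.Icc 0 N, {u : ℕ → U | c j ≤ g k (traj F ξ u w.1 k) (u k) j}) ∩
            {u : ℕ → U | c j ≤ θ (traj F ξ u w.1 (N + 1)) j}) := by
      ext u
      simp only [Set.mem_setOf_eq, Set.mem_iInter, Set.mem_inter_iff, Finset.mem_Icc, Adm,
        Pi.le_def]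
      constructor
      · intro h w j
        exact ⟨fun k hk => (h w.1 w.2).1 k hk.2 j, (h w.1 w.2).2 j⟩
      · intro h w hw
        exact ⟨fun k hk j => (h ⟨w, hw⟩ j).1 k ⟨Nat.zero_le _, hk⟩, fun j => (h ⟨w, hw⟩ j).2⟩
    rw [hset]
    refine isClosed_iInter fun w => isClosed_iInter fun j => IsClosed.inter ?_ ?_
    · exact isClosed_biInter fun k _ => usc_superlevel_closed (husc w k j) (c j)
    · exact usc_superlevel_closed (huscθ w j) (c j)
  -- `Γ(·)_i` is upper semicontinuous
  have hΓusc : UpperSemicontinuous fun u : ℕ → U => Gam N F Ω g θ ξ u i := by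
    have : (fun u : ℕ → U => Gam N F Ω g θ ξ u i) =
        fun u => ⨅ w, Gfun N F Ω g θ ξ i w u := rfl
    rw [this]
    refine upperSemicontinuous_ciInf (fun u => hbdd i u) fun w => ?_
    exact usc_min (usc_finset_inf' neI fun k _ => husc w k i) (huscθ w i)
  -- extreme value theorem on the compact admissible set
  obtain ⟨us, husA, husmax⟩ :=
    usc_exists_max hAclosed.isCompact ⟨u₀, hu₀⟩ hΓusc
  exact ⟨⟨Gam N F Ω g θ ξ us, us, ⟨husA, fun u' hu' => husmax u' hu'⟩, rfl⟩, hsub⟩
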